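/- With G, z, λ as above, and Δ̄_z : D(G) → D(G)⊗D(G) determined by g ↦ g⊗g and δ_g ↦ Σ_{σ,τ∈Z/2} δ^σ_{gz^τ} ⊗ δ^τ_{gz^σ}, the diagram commutes: (λ ⊗ λ) ∘ Δ̄ = Δ̄_z ∘ λ. -/

import Mathlib

/-!
STATEMENT 7: With `G`, `z`, `λ` as before, and
`Δ̄_z : D(G) → D(G) ⊗ D(G)` determined by `g ↦ g ⊗ g` and
`δ_g ↦ Σ_{σ,τ∈Z/2} δ^σ_{gz^τ} ⊗ δ^τ_{gz^σ}`, the diagram commutes: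
`(λ ⊗ λ) ∘ Δ̄ = Δ̄_z ∘ λ`.

`D(G)` is modeled on the basis `{g ⊗ δ_h}` indexed by `G × G`, and
`D(G) ⊗ D(G)` on the basis indexed by `(G × G) × (G × G)`.
Here `δ_u^σ = e^σ·δ_u` with `e^σ = (1 + (−1)^σ z)/2`; more generally, for a
basis element we use `g·δ_u^σ = ½((g,u) + (−1)^σ (gz,u))`.
-/

open Finsupp

/-- Tensor product of elements of `D(G)`, as an element of `D(G) ⊗ D(G)`. -/
noncomputable def fTensor (k G : Type) [Field k] [Group G] [DecidableEq G]
    (a b : (G × G) →₀ k) : ((G × G) × (G × G)) →₀ k :=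
  a.sum fun p c => b.sum fun q d => Finsupp.single (p, q) (c * d)

/-- The element `g·δ_u^σ = g·e^σ·δ_u = ½((g,u) + (−1)^σ (gz,u))` of `D(G)`. -/
noncomputable def parDelta (k G : Type) [Field k] [Group G] [DecidableEq G]
    (z : G) (g u : G) (σ : Bool) : (G × G) →₀ k :=
  (2 : k)⁻¹ • (Finsupp.single (g, u) (1 : k)
    + (if σ then (-1 : k) else (1 : k)) • Finsupp.single (g * z, u) (1 : k))

/-- `z^σ` for `σ ∈ Z/2`. -/
def zpow2 (G : Type) [Group G] (z : G) (σ : Bool) : G := if σ then z else 1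

/-- The value of the twisted coproduct `Δ̄_z` on the basis element `g·δ_h`:
`Δ̄_z(g·δ_h) = Σ_{σ,τ} (g·δ^σ_{hz^τ}) ⊗ (g·δ^τ_{hz^σ})`. -/
noncomputable def deltaZbasis (k G : Type) [Field k] [Group G] [DecidableEq G]
    (z : G) (p : G × G) : ((G × G) × (G × G)) →₀ k :=
  ∑ σ : Bool, ∑ τ : Bool,
    fTensor k G (parDelta k G z p.1 (p.2 * zpow2 G z τ) σ)
      (parDelta k G z p.1 (p.2 * zpow2 G z σ) τ)

/-- The twisted coproduct `Δ̄_z`, `g ↦ g ⊗ g`,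
`δ_g ↦ Σ_{σ,τ} δ^σ_{gz^τ} ⊗ δ^τ_{gz^σ}` (linear extension). -/
noncomputable def deltaZ (k G : Type) [Field k] [Group G] [DecidableEq G]
    (z : G) (a : (G × G) →₀ k) : ((G × G) × (G × G)) →₀ k :=
  a.sum fun p c => c • deltaZbasis k G z p

/-- The untwisted coproduct `Δ̄` (`g ↦ g ⊗ g`, `δ_g ↦ δ_g ⊗ δ_g`). -/
noncomputable def deltaBar (k G : Type) [Field k] [Group G] [DecidableEq G]
    (a : (G × G) →₀ k) : ((G × G) × (G × G)) →₀ k :=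
  a.sum fun p c => Finsupp.single (p, p) c

/-- The automorphism `λ` (`g ↦ g`, `δ_g ↦ δ_g⁰ + δ_{gz}¹`). -/
noncomputable def lamMap (k G : Type) [Field k] [Group G] [DecidableEq G]
    (z : G) (a : (G × G) →₀ k) : (G × G) →₀ k :=
  a.sum fun p c => ((2 : k)⁻¹ * c) •
    (Finsupp.single (p.1, p.2) (1 : k) + Finsupp.single (p.1 * z, p.2) (1 : k)
      + Finsupp.single (p.1, p.2 * z) (1 : k) - Finsupp.single (p.1 * z, p.2 * z) (1 : k))

/-- `λ ⊗ λ : D(G) ⊗ D(G) → D(G) ⊗ D(G)`. -/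
noncomputable def lam2 (k G : Type) [Field k] [Group G] [DecidableEq G]
    (z : G) (t : ((G × G) × (G × G)) →₀ k) : ((G × G) × (G × G)) →₀ k :=
  t.sum fun pq c => c • fTensor k G (lamMap k G z (Finsupp.single pq.1 (1 : k)))
    (lamMap k G z (Finsupp.single pq.2 (1 : k)))

section Aux
variable {k G : Type} [Field k] [Group G] [DecidableEq G]

lemma fTensor_single_single (p q : G × G) (c d : k) :
    fTensor k G (Finsupp.single p c) (Finsupp.single q d) = Finsupp.single (p, q) (c * d) := by
  simp [fTensor, Finsupp.sum_single_index]

lemma fTensor_add_left (a a' b : (G × G) →₀ k) :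
    fTensor k G (a + a') b = fTensor k G a b + fTensor k G a' b := by
  unfold fTensor
  apply Finsupp.sum_add_index' <;> intros <;>
    simp [add_mul, Finsupp.single_add, Finsupp.sum_add]

lemma fTensor_add_right (a b b' : (G × G) →₀ k) :
    fTensor k G a (b + b') = fTensor k G a b + fTensor k G a b' := by
  unfold fTensor
  rw [← Finsupp.sum_add]
  apply Finsupp.sum_congr
  intro p _
  apply Finsupp.sum_add_index' <;> intros <;>
    simp [mul_add, Finsupp.single_add]

lemma fTensor_smul_left (c : k) (a b : (G × G) →₀ k) :
    fTensor k G (c • a) b = c • fTensor k G a b := by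
  unfold fTensor
  rw [Finsupp.sum_smul_index, Finsupp.smul_sum]
  · apply Finsupp.sum_congr; intro p _
    rw [Finsupp.smul_sum]
    apply Finsupp.sum_congr; intro q _
    simp only [Finsupp.smul_single', mul_assoc]
  · intro p; simp

lemma fTensor_smul_right (c : k) (a b : (G × G) →₀ k) :
    fTensor k G a (c • b) = c • fTensor k G a b := by
  unfold fTensor
  rw [Finsupp.smul_sum]
  apply Finsupp.sum_congr; intro p _
  rw [Finsupp.sum_smul_index, Finsupp.smul_sum]
  · apply Finsupp.sum_congr; intro q _
    simp only [Finsupp.smul_single', mul_left_comm]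
  · intro q; simp

lemma fTensor_sub_left (a a' b : (G × G) →₀ k) :
    fTensor k G (a - a') b = fTensor k G a b - fTensor k G a' b := by
  have := fTensor_add_left (a - a') a' b
  simp at this
  rw [eq_sub_iff_add_eq]; exact this.symm

lemma fTensor_sub_right (a b b' : (G × G) →₀ k) :
    fTensor k G a (b - b') = fTensor k G a b - fTensor k G a b' := by
  have := fTensor_add_right a (b - b') b'
  simp at this
  rw [eq_sub_iff_add_eq]; exact this.symm

end Aux

section Aux2
variable {k G : Type} [Field k] [Group G] [DecidableEq G] (z : G)

lemma lamMap_single (p : G × G) (c : k) :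
    lamMap k G z (Finsupp.single p c) = ((2 : k)⁻¹ * c) •
    (Finsupp.single (p.1, p.2) (1 : k) + Finsupp.single (p.1 * z, p.2) (1 : k)
      + Finsupp.single (p.1, p.2 * z) (1 : k) - Finsupp.single (p.1 * z, p.2 * z) (1 : k)) := by
  unfold lamMap
  rw [Finsupp.sum_single_index]
  simp

lemma deltaBar_single (p : G × G) (c : k) :
    deltaBar k G (Finsupp.single p c) = Finsupp.single (p, p) c := by
  unfold deltaBar
  rw [Finsupp.sum_single_index]
  simp

lemma deltaZ_single (p : G × G) (c : k) :
    deltaZ k G z (Finsupp.single p c) = c • deltaZbasis k G z p := by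
  unfold deltaZ
  rw [Finsupp.sum_single_index]
  simp

lemma lam2_single (pq : (G × G) × (G × G)) (c : k) :
    lam2 k G z (Finsupp.single pq c) = c • fTensor k G
      (lamMap k G z (Finsupp.single pq.1 (1 : k)))
      (lamMap k G z (Finsupp.single pq.2 (1 : k))) := by
  unfold lam2
  rw [Finsupp.sum_single_index]
  simp

lemma deltaBar_add (a b : (G × G) →₀ k) :
    deltaBar k G (a + b) = deltaBar k G a + deltaBar k G b := by
  unfold deltaBar
  apply Finsupp.sum_add_index' <;> intros <;> simp [Finsupp.single_add]

lemma lamMap_add (a b : (G × G) →₀ k) :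
    lamMap k G z (a + b) = lamMap k G z a + lamMap k G z b := by
  unfold lamMap
  apply Finsupp.sum_add_index' <;> intros <;> simp [mul_add, add_smul]

lemma deltaZ_add (a b : (G × G) →₀ k) :
    deltaZ k G z (a + b) = deltaZ k G z a + deltaZ k G z b := by
  unfold deltaZ
  apply Finsupp.sum_add_index' <;> intros <;> simp [add_smul]

lemma lam2_add (a b : ((G × G) × (G × G)) →₀ k) :
    lam2 k G z (a + b) = lam2 k G z a + lam2 k G z b := by
  unfold lam2
  apply Finsupp.sum_add_index' <;> intros <;> simp [add_smul]

lemma deltaZ_smul (c : k) (a : (G × G) →₀ k) :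
    deltaZ k G z (c • a) = c • deltaZ k G z a := by
  unfold deltaZ
  rw [Finsupp.sum_smul_index, Finsupp.smul_sum]
  · apply Finsupp.sum_congr; intro p _
    rw [smul_smul]
  · intro p; simp

lemma deltaZ_sub (a b : (G × G) →₀ k) :
    deltaZ k G z (a - b) = deltaZ k G z a - deltaZ k G z b := by
  have := deltaZ_add z (a - b) b
  simp at this
  rw [eq_sub_iff_add_eq]; exact this.symm

lemma lamMap_smul (c : k) (a : (G × G) →₀ k) :
    lamMap k G z (c • a) = c • lamMap k G z a := by
  unfold lamMap
  rw [Finsupp.sum_smul_index, Finsupp.smul_sum]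
  · apply Finsupp.sum_congr; intro p _
    rw [smul_smul, mul_left_comm]
  · intro p; simp

lemma key [CharZero k] (hz2 : z * z = 1) (g h : G) :
    fTensor k G (lamMap k G z (Finsupp.single (g, h) (1 : k)))
      (lamMap k G z (Finsupp.single (g, h) (1 : k))) =
    deltaZ k G z (lamMap k G z (Finsupp.single (g, h) (1 : k))) := by
  rw [lamMap_single]
  simp only [mul_one, smul_add, smul_sub]
  rw [deltaZ_sub, deltaZ_add, deltaZ_add]
  simp only [deltaZ_smul, deltaZ_single, fTensor_smul_left, fTensor_smul_right,
    fTensor_add_left, fTensor_add_right, fTensor_sub_left, fTensor_sub_right,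
    fTensor_single_single, one_smul, one_mul]
  simp only [deltaZbasis, parDelta, zpow2, Fintype.sum_bool, if_true, if_false,
    Bool.false_eq_true, Prod.fst, Prod.snd,
    mul_one, mul_assoc, hz2, smul_add, smul_sub, neg_smul, one_smul,
    fTensor_smul_left, fTensor_smul_right, fTensor_add_left, fTensor_add_right,
    fTensor_sub_left, fTensor_sub_right, fTensor_single_single, one_mul]
  match_scalars <;> (field_simp; try ring)

end Aux2

/-- `(λ ⊗ λ) ∘ Δ̄ = Δ̄_z ∘ λ`. -/
theorem lam_intertwines_coproducts (k G : Type) [Field k] [CharZero k] [Group G]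
    [Fintype G] [DecidableEq G] (z : G) (hzc : ∀ a : G, z * a = a * z)
    (hz2 : z * z = 1) :
    ∀ a : (G × G) →₀ k, lam2 k G z (deltaBar k G a) = deltaZ k G z (lamMap k G z a) := by
  intro a
  induction a using Finsupp.induction with
  | zero => simp [deltaBar, lam2, deltaZ, lamMap]
  | single_add p c f _ _ ih =>
    rw [deltaBar_add, lam2_add, lamMap_add, deltaZ_add, ih]
    congr 1
    obtain ⟨g, h⟩ := p
    rw [deltaBar_single, lam2_single]
    have hc : (Finsupp.single ((g, h) : G × G) c) = c • Finsupp.single ((g, h) : G × G) (1 : k) := by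
      simp
    rw [hc, lamMap_smul, deltaZ_smul, ← key z hz2 g h]
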